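/- Let p > 1 be real, Φ ∈ ℂ with Φ ≠ 0, and for i = 1, 2 let ζᵢ, ξᵢ ∈ ℂ satisfy 0 < |ξᵢ| < |ζᵢ| and ((|ζᵢ|²+|ξᵢ|²)/(|ζᵢ|²−|ξᵢ|²))^(p−1) · ζᵢ · conj(ξᵢ) = Φ. Then |ξ₁ − ξ₂| ≤ max(|ξ₁|/|ζ₁|, |ξ₂|/|ζ₂|) · |ζ₁ − ζ₂|. -/

import Mathlib

private lemma beltrami_vec_ineq (k₁ k₂ : ℝ) (ζ₁ ζ₂ : ℂ) (h₂ : 0 ≤ k₂) (h₁₂ : k₂ ≤ k₁)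
    (hgeom : 2*k₁*(‖ζ₁‖) ≤ (k₁+k₂)*(‖ζ₂‖)) :
    ‖(k₁:ℂ)*ζ₁ - (k₂:ℂ)*ζ₂‖ ≤ k₁ * ‖ζ₁ - ζ₂‖ := by
  have hk₁ : 0 ≤ k₁ := h₂.trans h₁₂
  set a₁ := ‖ζ₁‖ with ha₁
  set a₂ := ‖ζ₂‖ with ha₂
  have ha₂0 : 0 ≤ a₂ := norm_nonneg _
  set r := (ζ₁ * (starRingEnd ℂ) ζ₂).re with hrdef
  have hr : r ≤ a₁ * a₂ := by
    calc r ≤ ‖ζ₁ * (starRingEnd ℂ) ζ₂‖ := Complex.re_le_norm _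
      _ = a₁ * a₂ := by rw [norm_mul, Complex.norm_conj]
  have hn1 : Complex.normSq ((k₁:ℂ)*ζ₁ - (k₂:ℂ)*ζ₂)
      = k₁^2 * Complex.normSq ζ₁ + k₂^2 * Complex.normSq ζ₂ - 2*k₁*k₂*r := by
    simp only [hrdef, Complex.normSq_apply,
      Complex.sub_re, Complex.sub_im, Complex.mul_re, Complex.mul_im,
      Complex.ofReal_re, Complex.ofReal_im, Complex.conj_re, Complex.conj_im]
    ring
  have hn2 : Complex.normSq (ζ₁ - ζ₂) = Complex.normSq ζ₁ + Complex.normSq ζ₂ - 2*r := by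
    simp only [hrdef, Complex.normSq_apply,
      Complex.sub_re, Complex.sub_im, Complex.mul_re, Complex.mul_im,
      Complex.ofReal_re, Complex.ofReal_im, Complex.conj_re, Complex.conj_im]
    ring
  have hsq : ‖(k₁:ℂ)*ζ₁ - (k₂:ℂ)*ζ₂‖ ^ 2 ≤ (k₁ * ‖ζ₁ - ζ₂‖)^2 := by
    rw [mul_pow, Complex.sq_norm, Complex.sq_norm, hn1, hn2,
      ← Complex.sq_norm ζ₁, ← Complex.sq_norm ζ₂, ← ha₁, ← ha₂]
    have h1 : 2*k₁*(k₁-k₂)*r ≤ 2*k₁*(k₁-k₂)*(a₁*a₂) := by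
      apply mul_le_mul_of_nonneg_left hr
      have : 0 ≤ k₁ - k₂ := by linarith
      positivity
    have h2 : (k₁-k₂)*(2*k₁*a₁)*a₂ ≤ (k₁-k₂)*((k₁+k₂)*a₂)*a₂ := by
      have hkk : 0 ≤ k₁ - k₂ := by linarith
      exact mul_le_mul_of_nonneg_right (mul_le_mul_of_nonneg_left hgeom hkk) ha₂0
    nlinarith [h1, h2]
  have h0 : 0 ≤ k₁ * ‖ζ₁ - ζ₂‖ := by positivity
  exact (pow_le_pow_iff_left₀ (norm_nonneg _) h0 two_ne_zero).mp hsq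

private lemma beltrami_geom_step (p a₁ b₁ a₂ b₂ : ℝ) (hp : 0 ≤ p - 1)
    (hb₁ : 0 < b₁) (hb₂ : 0 < b₂) (h₁ : b₁ < a₁) (h₂ : b₂ < a₂)
    (habs : ((a₁^2+b₁^2)/(a₁^2-b₁^2))^(p-1) * (a₁*b₁)
          = ((a₂^2+b₂^2)/(a₂^2-b₂^2))^(p-1) * (a₂*b₂))
    (hcase : b₂ * a₁ ≤ b₁ * a₂) :
    2*(b₁*a₂)*a₁ ≤ ((b₁*a₂)+(b₂*a₁))*a₂ := by
  have ha₁ : 0 < a₁ := hb₁.trans h₁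
  have ha₂ : 0 < a₂ := hb₂.trans h₂
  have hd₁ : 0 < a₁^2 - b₁^2 := by nlinarith
  have hd₂ : 0 < a₂^2 - b₂^2 := by nlinarith
  have hbase : (a₂^2+b₂^2)/(a₂^2-b₂^2) ≤ (a₁^2+b₁^2)/(a₁^2-b₁^2) := by
    rw [div_le_div_iff₀ hd₂ hd₁]
    nlinarith [mul_le_mul hcase hcase (by positivity) (by positivity : (0:ℝ) ≤ b₁*a₂)]
  have hbase2pos : 0 < (a₂^2+b₂^2)/(a₂^2-b₂^2) := by positivity
  have hF : ((a₂^2+b₂^2)/(a₂^2-b₂^2))^(p-1) ≤ ((a₁^2+b₁^2)/(a₁^2-b₁^2))^(p-1) :=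
    Real.rpow_le_rpow hbase2pos.le hbase hp
  have hF₂pos : 0 < ((a₂^2+b₂^2)/(a₂^2-b₂^2))^(p-1) := Real.rpow_pos_of_pos hbase2pos _
  have hab : a₁*b₁ ≤ a₂*b₂ := by
    nlinarith [mul_le_mul_of_nonneg_right hF (by positivity : (0:ℝ) ≤ a₁*b₁)]
  have hXY : 0 < 2*b₁*a₁ + (b₁*a₂ + b₂*a₁) := by positivity
  have key : 2*b₁*a₁ ≤ b₁*a₂ + b₂*a₁ := by
    nlinarith [sq_nonneg (b₁*a₂ - b₂*a₁),
      mul_le_mul_of_nonneg_left hab (by positivity : (0:ℝ) ≤ 4*b₁*a₁), hXY]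
  nlinarith [mul_le_mul_of_nonneg_right key ha₂.le]

private lemma beltrami_ordered_case (p : ℝ) (hp : 0 ≤ p - 1) (Φ : ℂ) (hΦ : Φ ≠ 0)
    (ζ₁ ξ₁ ζ₂ ξ₂ : ℂ)
    (h01 : 0 < ‖ξ₁‖) (h11 : ‖ξ₁‖ < ‖ζ₁‖)
    (h02 : 0 < ‖ξ₂‖) (h12 : ‖ξ₂‖ < ‖ζ₂‖)
    (heq1 : ((((‖ζ₁‖ ^ 2 + ‖ξ₁‖ ^ 2) /
        (‖ζ₁‖ ^ 2 - ‖ξ₁‖ ^ 2)) ^ (p - 1) : ℝ) : ℂ) *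
        ζ₁ * (starRingEnd ℂ) ξ₁ = Φ)
    (heq2 : ((((‖ζ₂‖ ^ 2 + ‖ξ₂‖ ^ 2) /
        (‖ζ₂‖ ^ 2 - ‖ξ₂‖ ^ 2)) ^ (p - 1) : ℝ) : ℂ) *
        ζ₂ * (starRingEnd ℂ) ξ₂ = Φ)
    (hcase : ‖ξ₂‖ * ‖ζ₁‖ ≤ ‖ξ₁‖ * ‖ζ₂‖) :
    ‖ξ₁ - ξ₂‖ ≤
      (‖ξ₁‖ / ‖ζ₁‖) * ‖ζ₁ - ζ₂‖ := by
  set a₁ := ‖ζ₁‖ with ha₁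
  set b₁ := ‖ξ₁‖ with hb₁
  set a₂ := ‖ζ₂‖ with ha₂
  set b₂ := ‖ξ₂‖ with hb₂
  have ha₁0 : 0 < a₁ := h01.trans h11
  have ha₂0 : 0 < a₂ := h02.trans h12
  have hd₁ : 0 < a₁^2 - b₁^2 := by nlinarith
  have hd₂ : 0 < a₂^2 - b₂^2 := by nlinarith
  set F₁ := ((a₁^2+b₁^2)/(a₁^2-b₁^2))^(p-1) with hF₁def
  set F₂ := ((a₂^2+b₂^2)/(a₂^2-b₂^2))^(p-1) with hF₂def
  have hF₁pos : 0 < F₁ := Real.rpow_pos_of_pos (by positivity) _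
  have hF₂pos : 0 < F₂ := Real.rpow_pos_of_pos (by positivity) _
  have hΦabs : 0 < ‖Φ‖ := norm_pos_iff.mpr hΦ
  have habs₁ : F₁ * (a₁ * b₁) = ‖Φ‖ := by
    rw [← heq1, norm_mul, norm_mul, Complex.norm_real, Real.norm_eq_abs, Complex.norm_conj,
      abs_of_nonneg hF₁pos.le, ← ha₁, ← hb₁, mul_assoc]
  have habs₂ : F₂ * (a₂ * b₂) = ‖Φ‖ := by
    rw [← heq2, norm_mul, norm_mul, Complex.norm_real, Real.norm_eq_abs, Complex.norm_conj,
      abs_of_nonneg hF₂pos.le, ← ha₂, ← hb₂, mul_assoc]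
  have hz₁ : ζ₁ * (starRingEnd ℂ) ζ₁ = ((a₁^2 : ℝ) : ℂ) := by
    rw [Complex.mul_conj, Complex.normSq_eq_norm_sq, ← ha₁]
  have hz₂ : ζ₂ * (starRingEnd ℂ) ζ₂ = ((a₂^2 : ℝ) : ℂ) := by
    rw [Complex.mul_conj, Complex.normSq_eq_norm_sq, ← ha₂]
  have hc1 : ((F₁ : ℝ) : ℂ) * (starRingEnd ℂ) ζ₁ * ξ₁ = (starRingEnd ℂ) Φ := by
    have := congrArg (starRingEnd ℂ) heq1
    simpa [map_mul, Complex.conj_conj, Complex.conj_ofReal] using this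
  have hc2 : ((F₂ : ℝ) : ℂ) * (starRingEnd ℂ) ζ₂ * ξ₂ = (starRingEnd ℂ) Φ := by
    have := congrArg (starRingEnd ℂ) heq2
    simpa [map_mul, Complex.conj_conj, Complex.conj_ofReal] using this
  have habs₁C : ((F₁ * (a₁ * b₁) : ℝ) : ℂ) = ((‖Φ‖ : ℝ) : ℂ) := by
    exact_mod_cast congrArg (fun x : ℝ => (x : ℂ)) habs₁
  have habs₂C : ((F₂ * (a₂ * b₂) : ℝ) : ℂ) = ((‖Φ‖ : ℝ) : ℂ) := by
    exact_mod_cast congrArg (fun x : ℝ => (x : ℂ)) habs₂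
  have key₁ : ((‖Φ‖ : ℝ) : ℂ) * (a₁ : ℂ) * ξ₁ = (b₁ : ℂ) * (starRingEnd ℂ) Φ * ζ₁ := by
    linear_combination (norm := (push_cast; ring1))
      (-(a₁:ℂ) * ξ₁) * habs₁C + ((b₁:ℂ) * ζ₁) * hc1 - ((F₁:ℂ) * (b₁:ℂ) * ξ₁) * hz₁
  have key₂ : ((‖Φ‖ : ℝ) : ℂ) * (a₂ : ℂ) * ξ₂ = (b₂ : ℂ) * (starRingEnd ℂ) Φ * ζ₂ := by
    linear_combination (norm := (push_cast; ring1))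
      (-(a₂:ℂ) * ξ₂) * habs₂C + ((b₂:ℂ) * ζ₂) * hc2 - ((F₂:ℂ) * (b₂:ℂ) * ξ₂) * hz₂
  have hkey : ((‖Φ‖ : ℝ) : ℂ) * (a₁ : ℂ) * (a₂ : ℂ) * (ξ₁ - ξ₂)
      = (starRingEnd ℂ) Φ * (((b₁*a₂ : ℝ) : ℂ) * ζ₁ - ((b₂*a₁ : ℝ) : ℂ) * ζ₂) := by
    linear_combination (norm := (push_cast; ring1)) (a₂:ℂ) * key₁ - (a₁:ℂ) * key₂
  have habs_eq : ‖Φ‖ * a₁ * a₂ * ‖ξ₁ - ξ₂‖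
      = ‖Φ‖ * ‖((b₁*a₂ : ℝ) : ℂ) * ζ₁ - ((b₂*a₁ : ℝ) : ℂ) * ζ₂‖ := by
    have h := congrArg (‖·‖) hkey
    simpa [norm_mul, Complex.norm_real, Complex.norm_conj, abs_of_pos hΦabs,
      abs_of_pos ha₁0, abs_of_pos ha₂0] using h
  have hgeom : 2*(b₁*a₂)*(‖ζ₁‖) ≤ ((b₁*a₂)+(b₂*a₁))*(‖ζ₂‖) := by
    rw [← ha₁, ← ha₂]
    apply beltrami_geom_step p a₁ b₁ a₂ b₂ hp h01 h02 h11 h12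
    · rw [← hF₁def, ← hF₂def]; exact habs₁.trans habs₂.symm
    · exact hcase
  have hvec : ‖((b₁*a₂ : ℝ) : ℂ) * ζ₁ - ((b₂*a₁ : ℝ) : ℂ) * ζ₂‖
      ≤ (b₁*a₂) * ‖ζ₁ - ζ₂‖ :=
    beltrami_vec_ineq (b₁*a₂) (b₂*a₁) ζ₁ ζ₂ (by positivity) hcase hgeom
  have hfinal : ‖Φ‖ * a₁ * a₂ * ‖ξ₁ - ξ₂‖
      ≤ ‖Φ‖ * a₁ * a₂ * ((b₁/a₁) * ‖ζ₁ - ζ₂‖) := by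
    rw [habs_eq]
    calc ‖Φ‖ * ‖((b₁*a₂ : ℝ) : ℂ) * ζ₁ - ((b₂*a₁ : ℝ) : ℂ) * ζ₂‖
        ≤ ‖Φ‖ * ((b₁*a₂) * ‖ζ₁ - ζ₂‖) :=
          mul_le_mul_of_nonneg_left hvec hΦabs.le
      _ = ‖Φ‖ * a₁ * a₂ * ((b₁/a₁) * ‖ζ₁ - ζ₂‖) := by
          field_simp
  have hpos : 0 < ‖Φ‖ * a₁ * a₂ := by positivity
  exact (mul_le_mul_iff_right₀ hpos).mp hfinal

/-- Pointwise content of Lemma 7: for real `p > 1` and `Φ ≠ 0`, if for `i = 1, 2`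
the pairs `ζᵢ, ξᵢ ∈ ℂ` satisfy `0 < |ξᵢ| < |ζᵢ|` and
`((|ζᵢ|² + |ξᵢ|²)/(|ζᵢ|² − |ξᵢ|²))^(p−1) · ζᵢ · conj ξᵢ = Φ` (real power `Real.rpow`),
then `|ξ₁ − ξ₂| ≤ max (|ξ₁|/|ζ₁|) (|ξ₂|/|ζ₂|) · |ζ₁ − ζ₂|`. -/
theorem beltrami_difference_estimate (p : ℝ) (hp : 1 < p) (Φ : ℂ) (hΦ : Φ ≠ 0)
    (ζ₁ ξ₁ ζ₂ ξ₂ : ℂ)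
    (h01 : 0 < ‖ξ₁‖) (h11 : ‖ξ₁‖ < ‖ζ₁‖)
    (h02 : 0 < ‖ξ₂‖) (h12 : ‖ξ₂‖ < ‖ζ₂‖)
    (heq1 : ((((‖ζ₁‖ ^ 2 + ‖ξ₁‖ ^ 2) /
        (‖ζ₁‖ ^ 2 - ‖ξ₁‖ ^ 2)) ^ (p - 1) : ℝ) : ℂ) *
        ζ₁ * (starRingEnd ℂ) ξ₁ = Φ)
    (heq2 : ((((‖ζ₂‖ ^ 2 + ‖ξ₂‖ ^ 2) /
        (‖ζ₂‖ ^ 2 - ‖ξ₂‖ ^ 2)) ^ (p - 1) : ℝ) : ℂ) *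
        ζ₂ * (starRingEnd ℂ) ξ₂ = Φ) :
    ‖ξ₁ - ξ₂‖ ≤
      max (‖ξ₁‖ / ‖ζ₁‖) (‖ξ₂‖ / ‖ζ₂‖) *
        ‖ζ₁ - ζ₂‖ := by
  have hp' : 0 ≤ p - 1 := by linarith
  rcases le_total (‖ξ₂‖ * ‖ζ₁‖) (‖ξ₁‖ * ‖ζ₂‖)
    with hc | hc
  · exact (beltrami_ordered_case p hp' Φ hΦ ζ₁ ξ₁ ζ₂ ξ₂ h01 h11 h02 h12 heq1 heq2 hc).trans
      (mul_le_mul_of_nonneg_right (le_max_left _ _) (norm_nonneg _))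
  · have h := beltrami_ordered_case p hp' Φ hΦ ζ₂ ξ₂ ζ₁ ξ₁ h02 h12 h01 h11 heq2 heq1 hc
    rw [norm_sub_rev ξ₂ ξ₁, norm_sub_rev ζ₂ ζ₁] at h
    exact h.trans (mul_le_mul_of_nonneg_right (le_max_right _ _) (norm_nonneg _))
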